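/- Let V be a finite-dimensional real inner product space with a skew-adjoint orthogonal operator F (F² = -I). Define Φ : V → C(ℝ, V ⊕ V) by Φ(η)(x) = (ū(x)/√2)·(η - Fη, η + Fη), where ū is the unique L² solution of u' - fu = 0 with ū(0) = 1 and f : ℝ → ℝ is continuous with f = 1 on (-∞,0] and f = -1 on [1,∞). Then Φ is injective and each Φ(η) lies in the kernel of the operator D = [[-d/dx, -f(x)F],[-f(x)F, d/dx]] acting on L²(ℝ, V ⊕ V). -/

import Mathlib

open MeasureTheory

/-- With `F` a skew-adjoint orthogonal operator (`F² = -I`) on a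
finite-dimensional real inner product space `V`, `f` continuous with `f = 1` on `(-∞,0]` and
`f = -1` on `[1,∞)`, and `ū` the unique `L²` solution of `u' - fu = 0` with `ū(0) = 1`, the map
`Φ(η)(x) = (ū(x)/√2)·(η - Fη, η + Fη)` is injective and takes values in the kernel of
`D = [[-d/dx, -fF],[-fF, d/dx]]`, i.e. each `Φ(η)` is square-integrable and satisfies
`(Φη)₁' = -f·F(Φη)₂` and `(Φη)₂' = f·F(Φη)₁`. -/
theorem stmt18 {V : Type*} [NormedAddCommGroup V] [InnerProductSpace ℝ V]
    [FiniteDimensional ℝ V]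
    (F : V →ₗ[ℝ] V) (hFa : LinearMap.adjoint F = -F) (hF2 : F * F = -1)
    (f : ℝ → ℝ) (hf : Continuous f)
    (hf0 : ∀ t ≤ (0 : ℝ), f t = 1) (hf1 : ∀ t ≥ (1 : ℝ), f t = -1)
    (u : ℝ → ℝ) (hu : ∀ t, HasDerivAt u (f t * u t) t) (hu0 : u 0 = 1)
    (huL2 : MemLp u 2 volume) :
    let Φ : V → ℝ → V × V := fun η x =>
      ((u x / Real.sqrt 2) • (η - F η), (u x / Real.sqrt 2) • (η + F η))
    Function.Injective Φ ∧
    ∀ η : V, MemLp (Φ η) 2 volume ∧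
      (∀ x : ℝ, HasDerivAt (fun t => (Φ η t).1) (-(f x • F ((Φ η x).2))) x) ∧
      (∀ x : ℝ, HasDerivAt (fun t => (Φ η t).2) (f x • F ((Φ η x).1)) x) := by
  intro Φ
  have hF2' : ∀ v : V, F (F v) = -v := by
    intro v
    have := congrArg (fun L => L v) hF2
    simpa [Module.End.mul_apply] using this
  have hs2 : Real.sqrt 2 ≠ 0 := by positivity
  constructor
  · intro η₁ η₂ h
    have h0 := congrArg (fun g => g 0) h
    simp only [Φ, hu0] at h0
    have h1 : (1 / Real.sqrt 2 : ℝ) • (η₁ - F η₁) = (1 / Real.sqrt 2) • (η₂ - F η₂) :=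
      congrArg Prod.fst h0
    have h2 : (1 / Real.sqrt 2 : ℝ) • (η₁ + F η₁) = (1 / Real.sqrt 2) • (η₂ + F η₂) :=
      congrArg Prod.snd h0
    have h1' : η₁ - F η₁ = η₂ - F η₂ := by
      have := smul_right_injective V (by positivity : (1 / Real.sqrt 2 : ℝ) ≠ 0)
      exact this h1
    have h2' : η₁ + F η₁ = η₂ + F η₂ := by
      have := smul_right_injective V (by positivity : (1 / Real.sqrt 2 : ℝ) ≠ 0)
      exact this h2
    have : (2 : ℝ) • η₁ = (2 : ℝ) • η₂ := by
      have := congrArg₂ (· + ·) h1' h2'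
      simp only [sub_add_add_cancel] at this
      simpa [two_smul] using this
    exact smul_right_injective V (by norm_num) this
  · intro η
    refine ⟨?_, ?_, ?_⟩
    · have hucont : Continuous u :=
        continuous_iff_continuousAt.mpr fun t => (hu t).continuousAt
      have hcont : Continuous (Φ η) := by
        exact ((hucont.div_const _).smul continuous_const).prodMk
          ((hucont.div_const _).smul continuous_const)
      refine huL2.of_le_mul (c := (‖η - F η‖ + ‖η + F η‖) / Real.sqrt 2) hcont.aestronglyMeasurable ?_
      filter_upwards with x
      have h1 : ‖Φ η x‖ = max ‖(u x / Real.sqrt 2) • (η - F η)‖ ‖(u x / Real.sqrt 2) • (η + F η)‖ :=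
        rfl
      rw [h1]
      have hb : ∀ c : V, ‖c‖ ≤ ‖η - F η‖ + ‖η + F η‖ →
          ‖(u x / Real.sqrt 2) • c‖ ≤ (‖η - F η‖ + ‖η + F η‖) / Real.sqrt 2 * ‖u x‖ := by
        intro c hc
        rw [norm_smul, Real.norm_eq_abs, abs_div, abs_of_nonneg (Real.sqrt_nonneg 2)]
        rw [div_mul_eq_mul_div, div_mul_eq_mul_div, mul_comm]
        have : ‖u x‖ = |u x| := rfl
        rw [this]
        gcongr
      refine max_le (hb _ ?_) (hb _ ?_)
      · exact le_add_of_nonneg_right (norm_nonneg _)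
      · exact le_add_of_nonneg_left (norm_nonneg _)
    · intro x
      have hd : HasDerivAt (fun t => u t / Real.sqrt 2) (f x * u x / Real.sqrt 2) x :=
        (hu x).div_const _
      have := hd.smul_const (η - F η)
      convert this using 1
      simp only [Φ, map_add, LinearMap.map_smul, hF2' η]
      rw [smul_smul]
      module
    · intro x
      have hd : HasDerivAt (fun t => u t / Real.sqrt 2) (f x * u x / Real.sqrt 2) x :=
        (hu x).div_const _
      have := hd.smul_const (η + F η)
      convert this using 1
      simp only [Φ, map_sub, LinearMap.map_smul, hF2' η]
      rw [smul_smul]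
      module
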